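/- Let α, μ ≥ 0 and β > 0 with α − β(μ+1) < 0, and set s̃ := 2(μ+1 − α/β) > 0. For every complex s with 0 < Re(s) < s̃, the Mellin transform of S^!_{α,β,μ} satisfies ∫_0^∞ S^!_{α,β,μ}(r)·r^{s−1} dr = Γ(μ+1−s/2)·Γ(s/2) / (2·Γ(μ+1)) · η(β(s̃−s)/2), where η(z) := Σ_{n=0}^∞ (n!)^{−z} for Re(z) > 0. -/

import Mathlib

open Filter Complex MeasureTheory

lemma cpow_pos_eq_exp {x : ℝ} (hx : 0 < x) (w : ℂ) :
    (x : ℂ) ^ w = Complex.exp (w * Real.log x) := by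
  rw [Complex.cpow_def_of_ne_zero (by exact_mod_cast hx.ne'), ← Complex.ofReal_log hx.le,
    mul_comm]

lemma key_identity {a r μ : ℝ} (ha : 0 < a) (hr : 0 < r) (s : ℂ) :
    |2 * a * r / (a + r ^ 2) ^ 2| •
      ((((r ^ 2 / (a + r ^ 2) : ℝ)) : ℂ) ^ (s / 2 - 1) *
        (1 - ((r ^ 2 / (a + r ^ 2) : ℝ) : ℂ)) ^ ((μ : ℂ) + 1 - s / 2 - 1))
    = (2 * (a : ℂ) ^ ((μ : ℂ) + 1 - s / 2)) *
        ((r : ℂ) ^ (s - 1) * (((a + r ^ 2) ^ (μ + 1) : ℝ) : ℂ)⁻¹) := by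
  have hA : (0:ℝ) < a + r ^ 2 := by positivity
  have hAc : ((a : ℂ) + (r : ℂ) ^ 2) ≠ 0 := by exact_mod_cast hA.ne'
  have h1 : (1 : ℂ) - ((r ^ 2 / (a + r ^ 2) : ℝ) : ℂ) = ((a / (a + r ^ 2) : ℝ) : ℂ) := by
    push_cast; field_simp; ring
  rw [h1]
  have habs : |2 * a * r / (a + r ^ 2) ^ 2| = 2 * a * r / (a + r ^ 2) ^ 2 := by
    rw [abs_of_pos]; positivity
  rw [habs, real_smul]
  have hlog1 : Real.log (r ^ 2 / (a + r ^ 2)) = 2 * Real.log r - Real.log (a + r ^ 2) := by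
    rw [Real.log_div (by positivity) hA.ne', Real.log_pow]; push_cast; ring
  have hlog2 : Real.log (a / (a + r ^ 2)) = Real.log a - Real.log (a + r ^ 2) := by
    rw [Real.log_div ha.ne' hA.ne']
  rw [cpow_pos_eq_exp (by positivity : (0:ℝ) < r ^ 2 / (a + r ^ 2)),
    cpow_pos_eq_exp (by positivity : (0:ℝ) < a / (a + r ^ 2)),
    cpow_pos_eq_exp ha, cpow_pos_eq_exp hr, hlog1, hlog2]
  have hrpow : (((a + r ^ 2) ^ (μ + 1) : ℝ) : ℂ)⁻¹
      = Complex.exp (-(((μ : ℂ) + 1) * Real.log (a + r ^ 2))) := by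
    rw [Real.rpow_def_of_pos hA, Complex.ofReal_exp, ← Complex.exp_neg]
    push_cast; ring_nf
  have hco : ((2 * a * r / (a + r ^ 2) ^ 2 : ℝ) : ℂ)
      = 2 * Complex.exp ((Real.log a : ℂ) + Real.log r - 2 * Real.log (a + r ^ 2)) := by
    have : (2 * a * r / (a + r ^ 2) ^ 2 : ℝ)
        = 2 * Real.exp (Real.log a + Real.log r - 2 * Real.log (a + r ^ 2)) := by
      rw [Real.exp_sub, Real.exp_add, Real.exp_log ha, Real.exp_log hr,
        show (2 : ℝ) * Real.log (a + r ^ 2) = ((2:ℕ) : ℝ) * Real.log (a + r ^ 2) by norm_num,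
        Real.exp_nat_mul, Real.exp_log hA]
      ring
    rw [this]; push_cast [Complex.ofReal_exp]; ring
  rw [hrpow, hco]
  simp only [mul_assoc, ← Complex.exp_add]
  congr 2
  push_cast
  ring

lemma key_integral {a μ : ℝ} (ha : 0 < a) (hμ : 0 ≤ μ) {s : ℂ}
    (hs₀ : 0 < s.re) (hs₁ : s.re < 2 * (μ + 1)) :
    IntegrableOn (fun r : ℝ => (r : ℂ) ^ (s - 1) * (((a + r ^ 2) ^ (μ + 1) : ℝ) : ℂ)⁻¹)
      (Set.Ioi 0) ∧
    ∫ r in Set.Ioi (0:ℝ), (r : ℂ) ^ (s - 1) * (((a + r ^ 2) ^ (μ + 1) : ℝ) : ℂ)⁻¹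
      = (a : ℂ) ^ (s / 2 - ((μ : ℂ) + 1)) *
        (Complex.Gamma ((μ : ℂ) + 1 - s / 2) * Complex.Gamma (s / 2) /
          (2 * Complex.Gamma ((μ : ℂ) + 1))) := by
  have hA : ∀ r : ℝ, (0:ℝ) < a + r ^ 2 := fun r => by positivity
  set f : ℝ → ℝ := fun r => r ^ 2 / (a + r ^ 2) with hf
  set f' : ℝ → ℝ := fun r => 2 * a * r / (a + r ^ 2) ^ 2 with hf'
  set g : ℝ → ℂ := fun x => (x : ℂ) ^ (s / 2 - 1) *
      (1 - (x : ℂ)) ^ ((μ : ℂ) + 1 - s / 2 - 1) with hg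
  set G : ℝ → ℂ := fun r => (r : ℂ) ^ (s - 1) * (((a + r ^ 2) ^ (μ + 1) : ℝ) : ℂ)⁻¹ with hG
  have hderiv : ∀ r ∈ Set.Ioi (0:ℝ), HasDerivWithinAt f (f' r) (Set.Ioi 0) r := by
    intro r hr
    have h : HasDerivAt f (((2*r) * (a + r^2) - r^2 * (2*r)) / (a + r^2)^2) r := by
      exact (HasDerivAt.div ((hasDerivAt_pow 2 r).congr_deriv (by norm_num))
        (((hasDerivAt_pow 2 r).const_add a).congr_deriv (by norm_num)) (hA r).ne')
    have : ((2*r) * (a + r^2) - r^2 * (2*r)) / (a + r^2)^2 = f' r := by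
      rw [hf']; ring
    exact (this ▸ h).hasDerivWithinAt
  have hmono : StrictMonoOn f (Set.Ioi 0) := by
    intro x hx y hy hxy
    simp only [hf, Set.mem_Ioi] at *
    rw [div_lt_div_iff₀ (hA x) (hA y)]
    nlinarith [mul_lt_mul_of_pos_left (pow_lt_pow_left₀ hxy hx.le (by norm_num) : x ^ 2 < y ^ 2) ha]
  have hinj : Set.InjOn f (Set.Ioi 0) := hmono.injOn
  have himg : f '' Set.Ioi 0 = Set.Ioo 0 1 := by
    apply Set.eq_of_subset_of_subset
    · rintro x ⟨r, hr, rfl⟩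
      simp only [Set.mem_Ioi] at hr
      constructor
      · positivity
      · rw [div_lt_one (hA r)]; nlinarith [ha]
    · rintro x ⟨hx0, hx1⟩
      have h1x : (0:ℝ) < 1 - x := by linarith
      have hdiv : (0:ℝ) < a * x / (1 - x) := div_pos (by positivity) h1x
      refine ⟨Real.sqrt (a * x / (1 - x)), Set.mem_Ioi.mpr (Real.sqrt_pos.mpr hdiv), ?_⟩
      have hsq : Real.sqrt (a * x / (1 - x)) ^ 2 = a * x / (1 - x) := Real.sq_sqrt hdiv.le
      simp only [hf, hsq]
      rw [div_eq_iff (add_pos ha hdiv).ne']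
      field_simp
      ring
  have hre1 : (0:ℝ) < (s / 2).re := by
    simp only [Complex.div_ofNat_re]; linarith
  have hre2 : (0:ℝ) < ((μ : ℂ) + 1 - s / 2).re := by
    simp only [Complex.sub_re, Complex.add_re, Complex.one_re, Complex.ofReal_re,
      Complex.div_ofNat_re]; linarith
  have hbeta : IntegrableOn g (Set.Ioo 0 1) := by
    have h := Complex.betaIntegral_convergent hre1 hre2
    rw [intervalIntegrable_iff_integrableOn_Ioc_of_le (by norm_num)] at h
    exact h.mono_set Set.Ioo_subset_Ioc_self
  set c : ℂ := 2 * (a : ℂ) ^ ((μ : ℂ) + 1 - s / 2) with hcdef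
  have hane : (a : ℂ) ≠ 0 := by exact_mod_cast ha.ne'
  have hcne : c ≠ 0 :=
    mul_ne_zero two_ne_zero (fun h => hane ((Complex.cpow_eq_zero_iff _ _).mp h).1)
  have hptwise : Set.EqOn (fun r : ℝ => |f' r| • g (f r)) (fun r => c * G r) (Set.Ioi 0) :=
    fun r hr => key_identity ha hr s
  have hint : IntegrableOn (fun r => |f' r| • g (f r)) (Set.Ioi 0) := by
    rw [← integrableOn_image_iff_integrableOn_abs_deriv_smul measurableSet_Ioi hderiv hinj g,
      himg]
    exact hbeta
  have hcGint : IntegrableOn (fun r => c * G r) (Set.Ioi 0) :=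
    hint.congr_fun hptwise measurableSet_Ioi
  have hGint : IntegrableOn G (Set.Ioi 0) := by
    have h2 : IntegrableOn (fun x => c⁻¹ * (c * G x)) (Set.Ioi 0) := hcGint.const_mul c⁻¹
    refine h2.congr_fun (fun r hr => ?_) measurableSet_Ioi
    field_simp
  have hval : ∫ x in Set.Ioo (0:ℝ) 1, g x = c * ∫ r in Set.Ioi 0, G r := by
    rw [← himg, integral_image_eq_integral_abs_deriv_smul measurableSet_Ioi hderiv hinj g,
      setIntegral_congr_fun measurableSet_Ioi hptwise, integral_const_mul]
  have hΓ : Complex.Gamma ((μ : ℂ) + 1) ≠ 0 := by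
    apply Complex.Gamma_ne_zero
    intro m h
    have := congrArg Complex.re h
    simp only [Complex.add_re, Complex.ofReal_re, Complex.one_re, Complex.neg_re,
      Complex.natCast_re] at this
    have : (0:ℝ) ≤ (m : ℝ) := Nat.cast_nonneg m
    linarith
  have hBval : ∫ x in Set.Ioo (0:ℝ) 1, g x
      = Complex.Gamma (s / 2) * Complex.Gamma ((μ : ℂ) + 1 - s / 2) /
        Complex.Gamma ((μ : ℂ) + 1) := by
    have hGm := Complex.Gamma_mul_Gamma_eq_betaIntegral hre1 hre2
    have hsum : s / 2 + ((μ : ℂ) + 1 - s / 2) = (μ : ℂ) + 1 := by ring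
    rw [hsum, Complex.betaIntegral, intervalIntegral.integral_of_le (by norm_num : (0:ℝ) ≤ 1),
      MeasureTheory.integral_Ioc_eq_integral_Ioo] at hGm
    rw [eq_div_iff hΓ, mul_comm (∫ x in Set.Ioo (0:ℝ) 1, g x)]
    exact hGm.symm
  refine ⟨hGint, ?_⟩
  have : ∫ r in Set.Ioi (0:ℝ), G r = c⁻¹ * ∫ x in Set.Ioo (0:ℝ) 1, g x := by
    rw [hval]; field_simp
  rw [this, hBval, hcdef, mul_inv, ← Complex.cpow_neg,
    show -((μ : ℂ) + 1 - s / 2) = s / 2 - ((μ : ℂ) + 1) by ring]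
  have h2ne : (2:ℂ) ≠ 0 := two_ne_zero
  field_simp

lemma summable_fact_rpow {c : ℝ} (hc : c < 0) :
    Summable fun n : ℕ => (n.factorial : ℝ) ^ c := by
  rw [← summable_nat_add_iff 1]
  have h2 : ∀ n : ℕ, (2:ℝ) ^ n ≤ ((n + 1).factorial : ℝ) := by
    intro n
    have := Nat.factorial_mul_pow_le_factorial (m := 1) (n := n)
    simp only [Nat.factorial_one, one_mul] at this
    exact_mod_cast (by simpa [Nat.add_comm] using this : 2 ^ n ≤ (n + 1).factorial)
  have hmaj : Summable fun n : ℕ => ((2:ℝ) ^ c) ^ n :=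
    summable_geometric_of_lt_one (Real.rpow_nonneg (by norm_num) c)
      (Real.rpow_lt_one_of_one_lt_of_neg one_lt_two hc)
  refine Summable.of_nonneg_of_le (fun n => Real.rpow_nonneg (Nat.cast_nonneg _) c)
    (fun n => ?_) hmaj
  calc ((n + 1).factorial : ℝ) ^ c ≤ ((2:ℝ) ^ n) ^ c :=
        Real.rpow_le_rpow_of_nonpos (by positivity) (h2 n) hc.le
    _ = ((2:ℝ) ^ c) ^ n := by
        rw [← Real.rpow_natCast (2:ℝ) n, ← Real.rpow_mul (by norm_num),
          mul_comm (n:ℝ) c, Real.rpow_mul (by norm_num : (0:ℝ) ≤ 2), Real.rpow_natCast]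

/-- Equation (3.4): the Mellin transform of the factorial Mathieu-type series
`S^!_{α,β,μ}` on the strip `0 < Re(s) < s̃`, `s̃ = 2(μ+1−α/β)`, equals
`Γ(μ+1−s/2) Γ(s/2) / (2 Γ(μ+1)) · η(β(s̃−s)/2)`, where
`η(z) = ∑_{n=0}^∞ (n!)^{−z}`. -/
theorem mathieu_factorial_mellin_transform
    (α β μ : ℝ) (hα : 0 ≤ α) (hβ : 0 < β) (hμ : 0 ≤ μ)
    (hconv : α - β * (μ + 1) < 0)
    (s : ℂ) (hs₀ : 0 < s.re) (hs₁ : s.re < 2 * (μ + 1 - α / β)) :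
    ∫ r in Set.Ioi (0 : ℝ),
        ((∑' n : ℕ, ((n.factorial : ℝ)) ^ α /
          (((n.factorial : ℝ)) ^ β + r ^ 2) ^ (μ + 1) : ℝ) : ℂ)
        * (r : ℂ) ^ (s - 1)
      = Complex.Gamma ((μ : ℂ) + 1 - s / 2) * Complex.Gamma (s / 2)
        / (2 * Complex.Gamma ((μ : ℂ) + 1))
        * ∑' n : ℕ,
            Complex.exp (-((β : ℂ) * (((2 * (μ + 1 - α / β) : ℝ) : ℂ) - s) / 2) *
              (Real.log (n.factorial : ℝ) : ℂ)) := by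
  have hβc : (β : ℂ) ≠ 0 := by exact_mod_cast hβ.ne'
  set t : ℝ := s.re with ht
  have hdiv0 : 0 ≤ α / β := div_nonneg hα hβ.le
  have htlt : t < 2 * (μ + 1) := by linarith
  have hfac : ∀ n : ℕ, (0:ℝ) < (n.factorial : ℝ) := fun n => by exact_mod_cast n.factorial_pos
  have hfb : ∀ n : ℕ, (0:ℝ) < (n.factorial : ℝ) ^ β := fun n => Real.rpow_pos_of_pos (hfac n) β
  set F : ℕ → ℝ → ℂ := fun n r =>
    (((n.factorial : ℝ) ^ α / ((n.factorial : ℝ) ^ β + r ^ 2) ^ (μ + 1) : ℝ) : ℂ) *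
      (r : ℂ) ^ (s - 1) with hF
  have hkey := fun n : ℕ => key_integral (hfb n) hμ hs₀ htlt
  have hkeyt := fun n : ℕ => key_integral (a := (n.factorial : ℝ) ^ β) (hfb n) hμ
    (s := (t : ℂ)) (by simpa using hs₀) (by simpa using htlt)
  have hFeq : ∀ n : ℕ, ∀ r : ℝ, F n r = (((n.factorial : ℝ) ^ α : ℝ) : ℂ) *
      ((r : ℂ) ^ (s - 1) * ((((n.factorial : ℝ) ^ β + r ^ 2) ^ (μ + 1) : ℝ) : ℂ)⁻¹) := by
    intro n r
    rw [hF]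
    push_cast
    ring
  have hFint : ∀ n : ℕ, Integrable (F n) (volume.restrict (Set.Ioi 0)) := by
    intro n
    have h := (hkey n).1.const_mul (((n.factorial : ℝ) ^ α : ℝ) : ℂ)
    rw [show F n = fun r : ℝ => (((n.factorial : ℝ) ^ α : ℝ) : ℂ) *
      ((r : ℂ) ^ (s - 1) * ((((n.factorial : ℝ) ^ β + r ^ 2) ^ (μ + 1) : ℝ) : ℂ)⁻¹)
      from funext (hFeq n)]
    exact h
  -- the real integrand appearing as the norm
  set h : ℕ → ℝ → ℝ := fun n r =>
    r ^ (t - 1) * (((n.factorial : ℝ) ^ β + r ^ 2) ^ (μ + 1))⁻¹ with hh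
  have hnorm : ∀ n : ℕ, ∀ r ∈ Set.Ioi (0:ℝ),
      ‖F n r‖ = (n.factorial : ℝ) ^ α * h n r := by
    intro n r hr
    simp only [Set.mem_Ioi] at hr
    rw [hF, hh]
    simp only [norm_mul, Complex.norm_real, Real.norm_eq_abs,
      Complex.norm_cpow_eq_rpow_re_of_pos hr]
    rw [abs_of_nonneg (by positivity), Complex.sub_re, Complex.one_re]
    rw [div_eq_mul_inv]
    ring
  have hofreal : ∀ n : ℕ, ∀ r ∈ Set.Ioi (0:ℝ),
      ((h n r : ℝ) : ℂ) = (r : ℂ) ^ ((t : ℂ) - 1) *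
        ((((n.factorial : ℝ) ^ β + r ^ 2) ^ (μ + 1) : ℝ) : ℂ)⁻¹ := by
    intro n r hr
    simp only [Set.mem_Ioi] at hr
    rw [hh, Complex.ofReal_mul, Complex.ofReal_inv, Complex.ofReal_cpow hr.le]
    norm_cast
  have hIh : ∀ n : ℕ, ∫ r in Set.Ioi (0:ℝ), h n r =
      ((n.factorial : ℝ) ^ β) ^ (t / 2 - (μ + 1)) *
        (Real.Gamma (μ + 1 - t / 2) * Real.Gamma (t / 2) / (2 * Real.Gamma (μ + 1))) := by
    intro n
    have h1 : ((∫ r in Set.Ioi (0:ℝ), h n r : ℝ) : ℂ)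
        = ∫ r in Set.Ioi (0:ℝ), ((h n r : ℝ) : ℂ) := (integral_ofReal).symm
    rw [setIntegral_congr_fun measurableSet_Ioi (hofreal n), (hkeyt n).2] at h1
    have h2 : (((n.factorial : ℝ) ^ β : ℝ) : ℂ) ^ ((t : ℂ) / 2 - ((μ : ℂ) + 1)) *
        (Complex.Gamma ((μ : ℂ) + 1 - (t : ℂ) / 2) * Complex.Gamma ((t : ℂ) / 2) /
          (2 * Complex.Gamma ((μ : ℂ) + 1)))
        = ((((n.factorial : ℝ) ^ β) ^ (t / 2 - (μ + 1)) *
            (Real.Gamma (μ + 1 - t / 2) * Real.Gamma (t / 2) / (2 * Real.Gamma (μ + 1))) : ℝ) : ℂ) := by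
      rw [show (t : ℂ) / 2 - ((μ : ℂ) + 1) = ((t / 2 - (μ + 1) : ℝ) : ℂ) by push_cast; ring,
        ← Complex.ofReal_cpow (hfb n).le,
        show (μ : ℂ) + 1 - (t : ℂ) / 2 = ((μ + 1 - t / 2 : ℝ) : ℂ) by push_cast; ring,
        show (t : ℂ) / 2 = ((t / 2 : ℝ) : ℂ) by push_cast; ring,
        show (μ : ℂ) + 1 = ((μ + 1 : ℝ) : ℂ) by push_cast; ring,
        Complex.Gamma_ofReal, Complex.Gamma_ofReal, Complex.Gamma_ofReal]
      push_cast
      ring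
    rw [h2] at h1
    exact_mod_cast h1
  have hInorm : ∀ n : ℕ, ∫ r in Set.Ioi (0:ℝ), ‖F n r‖
      = (n.factorial : ℝ) ^ (α + β * (t / 2 - (μ + 1))) *
        (Real.Gamma (μ + 1 - t / 2) * Real.Gamma (t / 2) / (2 * Real.Gamma (μ + 1))) := by
    intro n
    rw [setIntegral_congr_fun measurableSet_Ioi (hnorm n), integral_const_mul, hIh n,
      ← Real.rpow_mul (hfac n).le, Real.rpow_add (hfac n)]
    ring
  have hexp : α + β * (t / 2 - (μ + 1)) < 0 := by
    have h1 : β / 2 * t < β / 2 * (2 * (μ + 1 - α / β)) :=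
      mul_lt_mul_of_pos_left hs₁ (by positivity)
    have h2 : β / 2 * (2 * (μ + 1 - α / β)) = β * (μ + 1) - α := by
      field_simp
    have h3 : α + β * (t / 2 - (μ + 1)) = α + β / 2 * t - β * (μ + 1) := by ring
    linarith
  have hsum_norm : Summable fun n : ℕ => ∫ r in Set.Ioi (0:ℝ), ‖F n r‖ := by
    have hs' := (summable_fact_rpow hexp).mul_right
      (Real.Gamma (μ + 1 - t / 2) * Real.Gamma (t / 2) / (2 * Real.Gamma (μ + 1)))
    exact hs'.congr fun n => (hInorm n).symm
  have hinterchange := MeasureTheory.integral_tsum_of_summable_integral_norm hFint hsum_norm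
  have hterm : ∀ n : ℕ, ∫ r in Set.Ioi (0:ℝ), F n r
      = (Complex.Gamma ((μ : ℂ) + 1 - s / 2) * Complex.Gamma (s / 2) /
          (2 * Complex.Gamma ((μ : ℂ) + 1))) *
        Complex.exp (-((β : ℂ) * (((2 * (μ + 1 - α / β) : ℝ) : ℂ) - s) / 2) *
          (Real.log (n.factorial : ℝ) : ℂ)) := by
    intro n
    rw [show F n = fun r : ℝ => (((n.factorial : ℝ) ^ α : ℝ) : ℂ) *
      ((r : ℂ) ^ (s - 1) * ((((n.factorial : ℝ) ^ β + r ^ 2) ^ (μ + 1) : ℝ) : ℂ)⁻¹)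
      from funext (hFeq n), integral_const_mul, (hkey n).2]
    rw [cpow_pos_eq_exp (hfb n) _, Real.log_rpow (hfac n),
      show (((n.factorial : ℝ) ^ α : ℝ) : ℂ)
          = Complex.exp ((α : ℂ) * (Real.log (n.factorial : ℝ) : ℂ)) from by
        rw [Real.rpow_def_of_pos (hfac n), Complex.ofReal_exp]; push_cast; ring_nf]
    rw [show ∀ A B K : ℂ, Complex.exp A * (Complex.exp B * K) = K * (Complex.exp A * Complex.exp B)
      from fun A B K => by ring, ← Complex.exp_add]
    congr 1
    push_cast
    field_simp
    ring
  calc ∫ r in Set.Ioi (0:ℝ),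
        ((∑' n : ℕ, ((n.factorial : ℝ)) ^ α /
          (((n.factorial : ℝ)) ^ β + r ^ 2) ^ (μ + 1) : ℝ) : ℂ) * (r : ℂ) ^ (s - 1)
      = ∫ r in Set.Ioi (0:ℝ), ∑' n : ℕ, F n r := by
        refine setIntegral_congr_fun measurableSet_Ioi (fun r hr => ?_)
        rw [Complex.ofReal_tsum, ← tsum_mul_right]
    _ = ∑' n : ℕ, ∫ r in Set.Ioi (0:ℝ), F n r := hinterchange.symm
    _ = ∑' n : ℕ, (Complex.Gamma ((μ : ℂ) + 1 - s / 2) * Complex.Gamma (s / 2) /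
          (2 * Complex.Gamma ((μ : ℂ) + 1))) *
        Complex.exp (-((β : ℂ) * (((2 * (μ + 1 - α / β) : ℝ) : ℂ) - s) / 2) *
          (Real.log (n.factorial : ℝ) : ℂ)) := tsum_congr hterm
    _ = _ := tsum_mul_left
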